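/- The column space of the (n,k)-binomial matrix B is invariant under the Laplacian L_k of F_k(G), and so is its orthogonal complement. -/

import Mathlib

open Finset

/-- The `k`-token graph of `G`: vertices are the `k`-subsets of `V`, two being adjacent
iff their symmetric difference is a pair `{a,b}` with `a ∈ A`, `b ∈ B`, `G.Adj a b`. -/
def tokenGraph {V : Type*} [DecidableEq V] (G : SimpleGraph V) (k : ℕ) :
    SimpleGraph {s : Finset V // s.card = k} where
  Adj A B := ∃ a b, a ∈ A.1 ∧ b ∈ B.1 ∧ G.Adj a b ∧ symmDiff A.1 B.1 = {a, b}
  symm := by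
    refine ⟨?_⟩
    rintro A B ⟨a, b, ha, hb, hab, hd⟩
    exact ⟨b, a, hb, ha, hab.symm, by rw [symmDiff_comm, hd, Finset.pair_comm]⟩
  loopless := by
    refine ⟨?_⟩
    rintro A ⟨a, b, ha, hb, hab, hd⟩
    rw [symmDiff_self] at hd
    exact (Finset.insert_ne_empty a {b}) hd.symm

noncomputable instance tokenGraph.instDecidableRelAdj {V : Type*} [DecidableEq V]
    (G : SimpleGraph V) (k : ℕ) : DecidableRel (tokenGraph G k).Adj :=
  Classical.decRel _

/-- The `(n,k)`-binomial matrix: rows are characteristic vectors of the `k`-subsets. -/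
def binMatrix (V : Type*) [DecidableEq V] (k : ℕ) :
    Matrix {s : Finset V // s.card = k} V ℝ :=
  fun A j => if j ∈ A.1 then 1 else 0

section Aux

variable {V : Type*} [Fintype V] [DecidableEq V] {k : ℕ}

lemma binMatrix_mulVec_apply (x : V → ℝ) (A : {s : Finset V // s.card = k}) :
    (binMatrix V k).mulVec x A = ∑ j ∈ A.1, x j := by
  simp [binMatrix, Matrix.mulVec, dotProduct, ite_mul, Finset.sum_ite_mem]

/-- Structure of a neighbor in the token graph. -/
lemma tokenGraph_adj_struct {G : SimpleGraph V} {A B : {s : Finset V // s.card = k}}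
    (h : (tokenGraph G k).Adj A B) :
    ∃ a b, a ∈ A.1 ∧ b ∉ A.1 ∧ G.Adj a b ∧ B.1 = insert b (A.1.erase a) := by
  obtain ⟨a, b, ha, hb, hab, hd⟩ := h
  have hab' : a ≠ b := G.ne_of_adj hab
  have haB : a ∉ B.1 := by
    intro haB
    have : a ∉ symmDiff A.1 B.1 := by
      simp [Finset.mem_symmDiff, ha, haB]
    rw [hd] at this; simp at this
  have hbA : b ∉ A.1 := by
    intro hbA
    have : b ∉ symmDiff A.1 B.1 := by
      simp [Finset.mem_symmDiff, hb, hbA]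
    rw [hd] at this; simp at this
  refine ⟨a, b, ha, hbA, hab, ?_⟩
  ext j
  simp only [Finset.mem_insert, Finset.mem_erase]
  constructor
  · intro hjB
    by_cases hjA : j ∈ A.1
    · have hja : j ≠ a := fun e => haB (e ▸ hjB)
      exact Or.inr ⟨hja, hjA⟩
    · have : j ∈ symmDiff A.1 B.1 := by
        simp [Finset.mem_symmDiff, hjA, hjB]
      rw [hd] at this
      rcases Finset.mem_insert.1 this with e | e
      · exact absurd (e ▸ hjB) haB
      · exact Or.inl (Finset.mem_singleton.1 e)
  · rintro (rfl | ⟨hja, hjA⟩)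
    · exact hb
    · by_contra hjB
      have : j ∈ symmDiff A.1 B.1 := by
        simp [Finset.mem_symmDiff, hjA, hjB]
      rw [hd] at this
      rcases Finset.mem_insert.1 this with e | e
      · exact hja e
      · exact hbA ((Finset.mem_singleton.1 e) ▸ hjA)

lemma tokenGraph_adj_of (G : SimpleGraph V) {A : {s : Finset V // s.card = k}}
    {a b : V} (ha : a ∈ A.1) (hb : b ∉ A.1) (hab : G.Adj a b)
    {B : {s : Finset V // s.card = k}} (hB : B.1 = insert b (A.1.erase a)) :
    (tokenGraph G k).Adj A B := by
  have hab' : a ≠ b := G.ne_of_adj hab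
  refine ⟨a, b, ha, ?_, hab, ?_⟩
  · rw [hB]; exact Finset.mem_insert_self _ _
  · rw [hB]
    ext j
    simp only [Finset.mem_symmDiff, Finset.mem_insert, Finset.mem_erase,
      Finset.mem_singleton]
    constructor
    · rintro (⟨hjA, hj⟩ | ⟨hj, hjA⟩)
      · push_neg at hj
        left
        by_contra hja
        exact (hj.2 hja hjA).elim
      · rcases hj with rfl | ⟨_, hjA'⟩
        · exact Or.inr rfl
        · exact absurd hjA' hjA
    · rintro (rfl | rfl)
      · exact Or.inl ⟨ha, by simp [hab']⟩
      · exact Or.inr ⟨Or.inl rfl, hb⟩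

lemma card_insert_erase {A : Finset V} {a b : V} (ha : a ∈ A) (hb : b ∉ A)
    (hA : A.card = k) : (insert b (A.erase a)).card = k := by
  rw [Finset.card_insert_of_notMem (fun h => hb (Finset.mem_of_mem_erase h)),
    Finset.card_erase_of_mem ha, hA]
  have : k ≠ 0 := by
    rintro rfl
    rw [Finset.card_eq_zero] at hA
    simp [hA] at ha
  omega

/-- The commutation relation `L_k ∘ B = B ∘ L`. -/
lemma lap_binMatrix_comm (G : SimpleGraph V) [DecidableRel G.Adj] (k : ℕ) (x : V → ℝ) :
    ((tokenGraph G k).lapMatrix ℝ).mulVec ((binMatrix V k).mulVec x) =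
      (binMatrix V k).mulVec ((G.lapMatrix ℝ).mulVec x) := by
  funext A
  set f : {s : Finset V // s.card = k} → ℝ := (binMatrix V k).mulVec x with hf
  -- LHS as a sum over neighbors
  have hL : ((tokenGraph G k).lapMatrix ℝ).mulVec f A =
      ∑ B ∈ (tokenGraph G k).neighborFinset A, (f A - f B) := by
    rw [SimpleGraph.lapMatrix_mulVec_apply, Finset.sum_sub_distrib, Finset.sum_const,
      SimpleGraph.card_neighborFinset_eq_degree, nsmul_eq_mul]
  -- rewrite the neighbor sum as a sum over adjacent pairs (a ∈ A, b ∉ A)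
  have hbij : ∑ B ∈ (tokenGraph G k).neighborFinset A, (f A - f B) =
      ∑ p ∈ (A.1 ×ˢ A.1ᶜ).filter (fun p => G.Adj p.1 p.2), (x p.1 - x p.2) := by
    refine (Finset.sum_bij (fun p hp =>
      (⟨insert p.2 (A.1.erase p.1), by
        simp only [Finset.mem_filter, Finset.mem_product, Finset.mem_compl] at hp
        exact card_insert_erase hp.1.1 hp.1.2 A.2⟩ :
        {s : Finset V // s.card = k})) ?_ ?_ ?_ ?_).symm
    · intro p hp
      simp only [Finset.mem_filter, Finset.mem_product, Finset.mem_compl] at hp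
      rw [SimpleGraph.mem_neighborFinset]
      exact tokenGraph_adj_of G hp.1.1 hp.1.2 hp.2 rfl
    · intro p hp q hq he
      simp only [Finset.mem_filter, Finset.mem_product, Finset.mem_compl] at hp hq
      have he' : insert p.2 (A.1.erase p.1) = insert q.2 (A.1.erase q.1) :=
        congrArg Subtype.val he
      have hb : p.2 = q.2 := by
        have : p.2 ∈ insert q.2 (A.1.erase q.1) := he' ▸ Finset.mem_insert_self _ _
        rcases Finset.mem_insert.1 this with h | h
        · exact h
        · exact absurd (Finset.mem_of_mem_erase h) hp.1.2
      have ha : p.1 = q.1 := by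
        have hnp : p.1 ∉ insert p.2 (A.1.erase p.1) := by
          simp only [Finset.mem_insert, Finset.mem_erase]
          push_neg
          exact ⟨fun e => hp.1.2 (e ▸ hp.1.1), fun h _ => h rfl⟩
        rw [he'] at hnp
        simp only [Finset.mem_insert, Finset.mem_erase] at hnp
        push_neg at hnp
        by_contra hne
        exact (hnp.2 hne) hp.1.1
      exact Prod.ext ha hb
    · intro B hB
      rw [SimpleGraph.mem_neighborFinset] at hB
      obtain ⟨a, b, ha, hb, hab, hBeq⟩ := tokenGraph_adj_struct hB
      refine ⟨(a, b), ?_, ?_⟩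
      · simp only [Finset.mem_filter, Finset.mem_product, Finset.mem_compl]
        exact ⟨⟨ha, hb⟩, hab⟩
      · exact Subtype.ext hBeq.symm
    · intro p hp
      simp only [Finset.mem_filter, Finset.mem_product, Finset.mem_compl] at hp
      obtain ⟨⟨ha, hb⟩, hab⟩ := hp
      rw [hf, binMatrix_mulVec_apply, binMatrix_mulVec_apply]
      simp only
      rw [Finset.sum_insert (fun h => hb (Finset.mem_of_mem_erase h)),
        ← Finset.add_sum_erase _ x ha]
      ring
  -- RHS
  have hR : (binMatrix V k).mulVec ((G.lapMatrix ℝ).mulVec x) A =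
      ∑ a ∈ A.1, ∑ b ∈ Finset.univ, (if G.Adj a b then x a - x b else 0) := by
    rw [binMatrix_mulVec_apply]
    refine Finset.sum_congr rfl fun a _ => ?_
    rw [SimpleGraph.lapMatrix_mulVec_apply, ← Finset.sum_filter]
    have : Finset.univ.filter (fun b => G.Adj a b) = G.neighborFinset a := by
      ext b; simp [SimpleGraph.mem_neighborFinset]
    rw [this, Finset.sum_sub_distrib, Finset.sum_const,
      SimpleGraph.card_neighborFinset_eq_degree, nsmul_eq_mul]
  -- split the RHS inner sum over A vs Aᶜ
  have hsplit : ∀ a : V, ∑ b ∈ Finset.univ, (if G.Adj a b then x a - x b else 0) =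
      (∑ b ∈ A.1, (if G.Adj a b then x a - x b else 0)) +
      (∑ b ∈ A.1ᶜ, (if G.Adj a b then x a - x b else 0)) :=
    fun a => (Finset.sum_add_sum_compl A.1 _).symm
  -- the inner part over A vanishes by antisymmetry
  have hzero : ∑ a ∈ A.1, ∑ b ∈ A.1, (if G.Adj a b then x a - x b else 0) = 0 := by
    have hneg : ∑ a ∈ A.1, ∑ b ∈ A.1, (if G.Adj a b then x a - x b else 0) =
        -∑ a ∈ A.1, ∑ b ∈ A.1, (if G.Adj a b then x a - x b else 0) := by
      conv_lhs => rw [Finset.sum_comm]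
      rw [← Finset.sum_neg_distrib]
      refine Finset.sum_congr rfl fun a _ => ?_
      rw [← Finset.sum_neg_distrib]
      refine Finset.sum_congr rfl fun b _ => ?_
      by_cases h : G.Adj a b
      · simp only [h, if_true, h.symm]; ring
      · simp only [h, if_false, neg_zero, ite_eq_right_iff]
        intro hh
        exact absurd hh.symm h
    linarith
  -- combine
  rw [hL, hbij, hR]
  have : ∑ p ∈ (A.1 ×ˢ A.1ᶜ).filter (fun p => G.Adj p.1 p.2), (x p.1 - x p.2) =
      ∑ a ∈ A.1, ∑ b ∈ A.1ᶜ, (if G.Adj a b then x a - x b else 0) := by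
    rw [Finset.sum_filter, Finset.sum_product]
  rw [this]
  simp_rw [hsplit]
  rw [Finset.sum_add_distrib, hzero, zero_add]

end Aux

theorem binMatrix_colSpace_lap_invariant {V : Type*} [Fintype V] [DecidableEq V]
    (G : SimpleGraph V) [DecidableRel G.Adj] (k : ℕ) :
    (∀ x : V → ℝ, ∃ y : V → ℝ,
        ((tokenGraph G k).lapMatrix ℝ).mulVec ((binMatrix V k).mulVec x) =
          (binMatrix V k).mulVec y) ∧
    (∀ v : {s : Finset V // s.card = k} → ℝ,
        (∀ x : V → ℝ, dotProduct v ((binMatrix V k).mulVec x) = 0) →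
        ∀ x : V → ℝ,
          dotProduct (((tokenGraph G k).lapMatrix ℝ).mulVec v)
            ((binMatrix V k).mulVec x) = 0) := by
  constructor
  · intro x
    exact ⟨(G.lapMatrix ℝ).mulVec x, lap_binMatrix_comm G k x⟩
  · intro v hv x
    have hsym : ((tokenGraph G k).lapMatrix ℝ).IsSymm :=
      (tokenGraph G k).isSymm_lapMatrix (R := ℝ)
    have h1 : ((tokenGraph G k).lapMatrix ℝ).mulVec v =
        Matrix.vecMul v ((tokenGraph G k).lapMatrix ℝ) := by
      conv_lhs => rw [← hsym.eq]
      rw [Matrix.mulVec_transpose]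
    rw [h1, ← Matrix.dotProduct_mulVec, lap_binMatrix_comm]
    exact hv _
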